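/- Under the same assumptions, ∂A_r/∂u at u = 1 equals x·F'(x)·F_r(x)/F(x) as formal power series (where F(x)/x has nonzero constant term, so the quotient is well-defined). -/

import Mathlib

open PowerSeries

/-- composition `Φ ∘ g` of formal power series (intended for `g` with zero constant
term, in which case the coefficient of `xⁿ` is the finite sum
`Σ_{k ≤ n} [tᵏ]Φ · [xⁿ](gᵏ)`). -/
noncomputable def pscomp {R : Type*} [CommSemiring R] (Φ g : PowerSeries R) : PowerSeries R :=
  PowerSeries.mk fun n =>
    ∑ k ∈ Finset.range (n + 1), (PowerSeries.coeff k Φ) * PowerSeries.coeff n (g ^ k)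

/-- the coefficientwise partial derivative `∂/∂u` of a power series in `x` with
polynomial coefficients in `u`, evaluated at `u = 1` -/
noncomputable def duAtOne (A : PowerSeries (Polynomial ℝ)) : PowerSeries ℝ :=
  PowerSeries.mk fun n =>
    Polynomial.eval 1 (Polynomial.derivative (PowerSeries.coeff n A))

namespace DuAux

local notation "Emap" => PowerSeries.map (Polynomial.evalRingHom (1 : ℝ))

lemma coeff_duAtOne (A : PowerSeries (Polynomial ℝ)) (n : ℕ) :
    PowerSeries.coeff n (duAtOne A) =
      Polynomial.eval 1 (Polynomial.derivative (PowerSeries.coeff n A)) := by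
  simp [duAtOne]

lemma duAtOne_add (P Q : PowerSeries (Polynomial ℝ)) :
    duAtOne (P + Q) = duAtOne P + duAtOne Q := by
  ext n
  simp [coeff_duAtOne]

lemma duAtOne_sub (P Q : PowerSeries (Polynomial ℝ)) :
    duAtOne (P - Q) = duAtOne P - duAtOne Q := by
  ext n
  simp [coeff_duAtOne]

lemma duAtOne_mul (P Q : PowerSeries (Polynomial ℝ)) :
    duAtOne (P * Q) = duAtOne P * Emap Q + Emap P * duAtOne Q := by
  ext n
  simp only [coeff_duAtOne, PowerSeries.coeff_mul, PowerSeries.coeff_map,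
    Polynomial.coe_evalRingHom, map_sum, Polynomial.derivative_mul,
    Polynomial.eval_finset_sum, Polynomial.eval_add, Polynomial.eval_mul, map_add]
  exact Finset.sum_add_distrib

lemma duAtOne_C (p : Polynomial ℝ) :
    duAtOne (PowerSeries.C p) =
      PowerSeries.C (Polynomial.eval 1 (Polynomial.derivative p)) := by
  ext n
  cases n <;> simp [coeff_duAtOne, PowerSeries.coeff_C]

lemma duAtOne_one : duAtOne 1 = 0 := by
  have := duAtOne_C 1
  simpa using this

lemma duAtOne_X : duAtOne PowerSeries.X = 0 := by
  ext n
  rcases n with _ | n <;> simp [coeff_duAtOne, PowerSeries.coeff_X]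
  rcases n with _ | n <;> simp [PowerSeries.coeff_X]

lemma constantCoeff_duAtOne (A : PowerSeries (Polynomial ℝ))
    (h : PowerSeries.constantCoeff A = 0) :
    PowerSeries.constantCoeff (duAtOne A) = 0 := by
  have : PowerSeries.coeff 0 (duAtOne A) = 0 := by
    rw [coeff_duAtOne]
    simp [PowerSeries.coeff_zero_eq_constantCoeff, h]
  simpa using this

lemma natsucc_eq_C (j : ℕ) :
    ((j : PowerSeries ℝ) + 1) = PowerSeries.C ((j : ℝ) + 1) := by
  rw [map_add, map_one, map_natCast]

lemma duAtOne_pow (A : PowerSeries (Polynomial ℝ)) (k : ℕ) :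
    duAtOne (A ^ (k + 1)) =
      ((k : PowerSeries ℝ) + 1) * ((Emap A) ^ k * duAtOne A) := by
  induction k with
  | zero => simp
  | succ k ih =>
    have h2 : A ^ (k + 2) = A * A ^ (k + 1) := by ring
    rw [h2, duAtOne_mul, ih, map_pow]
    push_cast
    ring

lemma E_pscomp (Ψ A : PowerSeries (Polynomial ℝ)) :
    Emap (pscomp Ψ A) = pscomp (Emap Ψ) (Emap A) := by
  ext n
  simp only [pscomp, PowerSeries.coeff_map, PowerSeries.coeff_mk, map_sum, map_mul]
  refine Finset.sum_congr rfl fun k _ => ?_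
  rw [← map_pow, PowerSeries.coeff_map]

lemma coeff_pow_mul_eq_zero {F G : PowerSeries ℝ}
    (hF : PowerSeries.constantCoeff F = 0) (hG : PowerSeries.constantCoeff G = 0)
    {n k : ℕ} (h : n ≤ k) : PowerSeries.coeff n (F ^ k * G) = 0 := by
  have hdF : (PowerSeries.X : PowerSeries ℝ) ∣ F := PowerSeries.X_dvd_iff.2 hF
  have hdG : (PowerSeries.X : PowerSeries ℝ) ∣ G := PowerSeries.X_dvd_iff.2 hG
  have : (PowerSeries.X : PowerSeries ℝ) ^ (k + 1) ∣ F ^ k * G := by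
    rw [pow_succ]
    exact mul_dvd_mul (pow_dvd_pow_of_dvd hdF k) hdG
  exact PowerSeries.X_pow_dvd_iff.1 this n (Nat.lt_succ_of_le h)

lemma coeff_pow_eq_zero {F : PowerSeries ℝ}
    (hF : PowerSeries.constantCoeff F = 0) {n k : ℕ} (h : n < k) :
    PowerSeries.coeff n (F ^ k) = 0 := by
  have hdF : (PowerSeries.X : PowerSeries ℝ) ∣ F := PowerSeries.X_dvd_iff.2 hF
  exact PowerSeries.X_pow_dvd_iff.1 (pow_dvd_pow_of_dvd hdF k) n h

lemma coeff_derivativeFun' (f : PowerSeries ℝ) (n : ℕ) :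
    PowerSeries.coeff n (PowerSeries.derivativeFun f) =
      PowerSeries.coeff (n + 1) f * (n + 1) :=
  PowerSeries.coeff_derivative f n

/-- key truncation lemma for multiplying a composition by another series -/
lemma coeff_pscomp_mul (Ψ F G : PowerSeries ℝ)
    (hF : PowerSeries.constantCoeff F = 0) (n : ℕ) :
    PowerSeries.coeff n (pscomp Ψ F * G) =
      ∑ k ∈ Finset.range (n + 1),
        PowerSeries.coeff k Ψ * PowerSeries.coeff n (F ^ k * G) := by
  rw [PowerSeries.coeff_mul]
  have step : ∀ p ∈ Finset.HasAntidiagonal.antidiagonal n,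
      PowerSeries.coeff p.1 (pscomp Ψ F) * PowerSeries.coeff p.2 G =
        ∑ k ∈ Finset.range (n + 1),
          PowerSeries.coeff k Ψ *
            (PowerSeries.coeff p.1 (F ^ k) * PowerSeries.coeff p.2 G) := by
    intro p hp
    have hp1 : p.1 ≤ n := Finset.HasAntidiagonal.antidiagonal.fst_le hp
    simp only [pscomp, PowerSeries.coeff_mk, Finset.sum_mul]
    rw [Finset.sum_subset (Finset.range_subset_range.2 (Nat.succ_le_succ hp1))]
    · exact Finset.sum_congr rfl fun k _ => by ring
    · intro k hk hk'
      have hlt : p.1 < k := by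
        simp only [Finset.mem_range, not_lt] at hk'
        omega
      rw [coeff_pow_eq_zero hF hlt, mul_zero, zero_mul]
  rw [Finset.sum_congr rfl step, Finset.sum_comm]
  refine Finset.sum_congr rfl fun k _ => ?_
  rw [PowerSeries.coeff_mul, Finset.mul_sum]

lemma derivativeFun_pow (F : PowerSeries ℝ) (k : ℕ) :
    PowerSeries.derivativeFun (F ^ (k + 1)) =
      ((k : PowerSeries ℝ) + 1) * (F ^ k * PowerSeries.derivativeFun F) := by
  induction k with
  | zero => simp
  | succ k ih =>
    have h2 : F ^ (k + 2) = F * F ^ (k + 1) := by ring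
    rw [h2, PowerSeries.derivativeFun_mul, ih]
    simp only [smul_eq_mul]
    push_cast
    ring

lemma derivativeFun_pscomp (Φ F : PowerSeries ℝ)
    (hF : PowerSeries.constantCoeff F = 0) :
    PowerSeries.derivativeFun (pscomp Φ F) =
      pscomp (PowerSeries.derivativeFun Φ) F * PowerSeries.derivativeFun F := by
  ext n
  rw [coeff_pscomp_mul _ _ _ hF, coeff_derivativeFun']
  simp only [pscomp, PowerSeries.coeff_mk, Finset.sum_mul]
  rw [Finset.sum_range_succ']
  simp only [pow_zero, PowerSeries.coeff_one, Nat.succ_ne_zero, if_false, mul_zero, zero_mul,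
    add_zero]
  refine Finset.sum_congr rfl fun j _ => ?_
  have h1 : PowerSeries.coeff n (PowerSeries.derivativeFun (F ^ (j + 1))) =
      PowerSeries.coeff (n + 1) (F ^ (j + 1)) * (n + 1) :=
    coeff_derivativeFun' _ _
  rw [derivativeFun_pow, natsucc_eq_C, PowerSeries.coeff_C_mul] at h1
  rw [coeff_derivativeFun']
  linear_combination (-(PowerSeries.coeff (j + 1) Φ)) * h1

lemma duAtOne_pscomp (w : ℕ → ℝ) (A : PowerSeries (Polynomial ℝ))
    (hA0 : PowerSeries.constantCoeff A = 0) :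
    duAtOne (pscomp (PowerSeries.mk fun k => Polynomial.C (w k)) A) =
      pscomp (PowerSeries.derivativeFun (PowerSeries.mk w)) (Emap A) * duAtOne A := by
  have hF : PowerSeries.constantCoeff (Emap A) = 0 := by
    have h0 : PowerSeries.coeff 0 (Emap A) = 0 := by
      rw [PowerSeries.coeff_map]
      simp [PowerSeries.coeff_zero_eq_constantCoeff, hA0]
    rw [← PowerSeries.coeff_zero_eq_constantCoeff_apply]
    exact h0
  have hG : PowerSeries.constantCoeff (duAtOne A) = 0 := constantCoeff_duAtOne A hA0
  ext n
  rw [coeff_pscomp_mul _ _ _ hF]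
  rw [Finset.sum_range_succ, coeff_pow_mul_eq_zero hF hG le_rfl, mul_zero, add_zero]
  rw [coeff_duAtOne]
  simp only [pscomp, PowerSeries.coeff_mk, map_sum, Polynomial.derivative_mul,
    Polynomial.derivative_C, zero_mul, zero_add, Polynomial.eval_finset_sum,
    Polynomial.eval_mul, Polynomial.eval_C, Polynomial.eval_add]
  have lhs : ∀ k ∈ Finset.range (n + 1), w k * Polynomial.eval 1
        (Polynomial.derivative (PowerSeries.coeff n (A ^ k))) =
      w k * PowerSeries.coeff n (duAtOne (A ^ k)) := fun k _ => by
    rw [coeff_duAtOne]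
  rw [Finset.sum_congr rfl lhs, Finset.sum_range_succ']
  simp only [pow_zero, duAtOne_one, map_zero, mul_zero, add_zero]
  refine Finset.sum_congr rfl fun j _ => ?_
  rw [duAtOne_pow, natsucc_eq_C, PowerSeries.coeff_C_mul, coeff_derivativeFun',
    PowerSeries.coeff_mk]
  ring

lemma derivativeFun_X : PowerSeries.derivativeFun (PowerSeries.X : PowerSeries ℝ) = 1 := by
  ext n
  rw [coeff_derivativeFun']
  rcases n with _ | n <;> simp [PowerSeries.coeff_X]

end DuAux

/-- Under the same assumptions as before (`F(x) = x·Φ(F(x))` with `Φ(0) = 1`, and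
`A_r` satisfying the bivariate functional equation), the derivative
`∂A_r/∂u |_{u=1}` equals `x·F'(x)·F_r(x)/F(x)`; since `F(x)` has zero constant term,
this quotient identity is stated in the multiplied form
`(∂A_r/∂u |_{u=1})·F(x) = x·F'(x)·F_r(x)`. -/
theorem du_gfBiv_at_one_eq (wseq : ℕ → ℝ) (hw : ∀ k, 0 ≤ wseq k) (hw0 : wseq 0 = 1)
    (Φ F Fr : PowerSeries ℝ) (hΦ : Φ = PowerSeries.mk wseq)
    (hF0 : PowerSeries.constantCoeff F = 0)
    (hFr0 : PowerSeries.constantCoeff Fr = 0)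
    (hF : F = PowerSeries.X * pscomp Φ F)
    (A : PowerSeries (Polynomial ℝ))
    (hA0 : PowerSeries.constantCoeff A = 0)
    (hAu1 : PowerSeries.map (Polynomial.evalRingHom (1 : ℝ)) A = F)
    (hA : PowerSeries.C (Polynomial.X : Polynomial ℝ) * A =
      PowerSeries.C (Polynomial.X : Polynomial ℝ) *
        (PowerSeries.X * pscomp (PowerSeries.mk fun k => Polynomial.C (wseq k)) A) +
      (PowerSeries.C (Polynomial.X : Polynomial ℝ) - 1) *
        (PowerSeries.mk fun n => Polynomial.C (PowerSeries.coeff n Fr) * Polynomial.X ^ n)) :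
    duAtOne A * F =
      PowerSeries.X * PowerSeries.derivativeFun F * Fr := by
  open DuAux in
  set G := duAtOne A with hGdef
  set P : PowerSeries ℝ := pscomp (PowerSeries.derivativeFun Φ) F with hPdef
  have hECX : PowerSeries.map (Polynomial.evalRingHom (1 : ℝ))
      (PowerSeries.C (Polynomial.X : Polynomial ℝ)) = 1 := by
    rw [PowerSeries.map_C]
    simp
  have hDCX : duAtOne (PowerSeries.C (Polynomial.X : Polynomial ℝ)) = 1 := by
    rw [duAtOne_C]
    simp
  have hEΨ : PowerSeries.map (Polynomial.evalRingHom (1 : ℝ))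
      (PowerSeries.mk fun k => Polynomial.C (wseq k)) = Φ := by
    ext n
    rw [hΦ, PowerSeries.coeff_map]
    simp
  have hEM : PowerSeries.map (Polynomial.evalRingHom (1 : ℝ))
      (PowerSeries.mk fun n => Polynomial.C (PowerSeries.coeff n Fr) * Polynomial.X ^ n)
      = Fr := by
    ext n
    rw [PowerSeries.coeff_map]
    simp
  have key := congrArg duAtOne hA
  simp only [duAtOne_add, duAtOne_mul, duAtOne_sub, duAtOne_one, duAtOne_X] at key
  rw [hECX, hDCX, hAu1] at key
  rw [map_mul, PowerSeries.map_X, E_pscomp, hEΨ, hAu1] at key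
  rw [duAtOne_pscomp wseq A hA0, hAu1, ← hΦ, ← hPdef, ← hGdef] at key
  rw [map_sub, hECX, map_one, sub_self, zero_mul, hEM] at key
  -- differentiate the univariate functional equation in x
  have hFx := congrArg PowerSeries.derivativeFun hF
  rw [PowerSeries.derivativeFun_mul, derivativeFun_pscomp Φ F hF0, ← hPdef,
    derivativeFun_X] at hFx
  simp only [smul_eq_mul] at hFx
  have eq1 : G - PowerSeries.X * P * G = Fr := by
    have hF' := hF
    linear_combination key - hF'
  have eq2 : PowerSeries.X * PowerSeries.derivativeFun F -
      PowerSeries.X * P * (PowerSeries.X * PowerSeries.derivativeFun F) = F := by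
    linear_combination PowerSeries.X * hFx - hF
  linear_combination (PowerSeries.X * PowerSeries.derivativeFun F) * eq1 - G * eq2
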